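/- Let a, b, ε, y ∈ ℂ ∖ {0} with a ∉ {y, −y, ε, −ε}, b ∉ {y, −y} and ε ≠ y. Define z : ℤ² → ℂ by z_{k,m} = h_{k,m}(y). Then for every (k, m) ∈ ℤ², (z_{k,m+1} − z_{k,m})·(z_{k+1,m} − z_{k+1,m+1}) = q·(z_{k,m} − z_{k+1,m})·(z_{k+1,m+1} − z_{k,m+1}), where q = ((a² − y²)(b² − ε²)) / ((b² − y²)(a² − ε²)); i.e. the zigzag map built from the rational spectral curve is a discrete conformal map with cross-ratio q = λ(Q). -/
import Mathlib

lemma key_id (a b ε y q : ℂ)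
    (hApY : a + y ≠ 0) (hBpY : b + y ≠ 0) (hEmY : ε - y ≠ 0)
    (hq : q * ((b ^ 2 - y ^ 2) * (a ^ 2 - ε ^ 2)) = (a ^ 2 - y ^ 2) * (b ^ 2 - ε ^ 2)) :
    ((a - y) / (a + y)) * (((b - y) / (b + y)) * ((ε + y) / (ε - y)) - 1) *
        (((ε + y) / (ε - y)) - ((b - y) / (b + y))) =
      q * (((b - y) / (b + y)) * (1 - ((a - y) / (a + y)) * ((ε + y) / (ε - y))) *
          (((a - y) / (a + y)) - ((ε + y) / (ε - y)))) := by
  have e1 : ((b - y) / (b + y)) * ((ε + y) / (ε - y)) - 1 =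
      ((b - y) * (ε + y) - (b + y) * (ε - y)) / ((b + y) * (ε - y)) := by
    rw [div_mul_div_comm, div_sub_one (mul_ne_zero hBpY hEmY)]
  have e2 : ((ε + y) / (ε - y)) - ((b - y) / (b + y)) =
      ((ε + y) * (b + y) - (ε - y) * (b - y)) / ((ε - y) * (b + y)) :=
    div_sub_div _ _ hEmY hBpY
  have e3 : 1 - ((a - y) / (a + y)) * ((ε + y) / (ε - y)) =
      ((a + y) * (ε - y) - (a - y) * (ε + y)) / ((a + y) * (ε - y)) := by
    rw [div_mul_div_comm, one_sub_div (mul_ne_zero hApY hEmY)]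
  have e4 : ((a - y) / (a + y)) - ((ε + y) / (ε - y)) =
      ((a - y) * (ε - y) - (a + y) * (ε + y)) / ((a + y) * (ε - y)) :=
    div_sub_div _ _ hApY hEmY
  rw [e1, e2, e3, e4, div_mul_div_comm, div_mul_div_comm, div_mul_div_comm,
    div_mul_div_comm, mul_div_assoc,
    ← mul_div_assoc, ← mul_div_assoc, div_eq_div_iff
      (mul_ne_zero (mul_ne_zero hApY (mul_ne_zero hBpY hEmY)) (mul_ne_zero hEmY hBpY))
      (mul_ne_zero (mul_ne_zero hBpY (mul_ne_zero hApY hEmY)) (mul_ne_zero hApY hEmY))]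
  linear_combination (-4 * y ^ 2 * (a + y) * (b + y) * (ε - y) ^ 2) * hq

/-- `hfun a b ε y k m = A^k·B^m·E^δ` where `A = (a−y)/(a+y)`, `B = (b−y)/(b+y)`,
`E = (ε+y)/(ε−y)`, and `δ = 1` if `k+m` is odd, `δ = 0` if `k+m` is even. -/
noncomputable def hfun (a b ε y : ℂ) (k m : ℤ) : ℂ :=
  ((a - y) / (a + y)) ^ k * ((b - y) / (b + y)) ^ m *
    (if Even (k + m) then 1 else (ε + y) / (ε - y))

/-- The zigzag map `z_{k,m} = h_{k,m}(y)` built from the rational spectral curve is a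
discrete conformal map with cross-ratio `q = ((a² − y²)(b² − ε²))/((b² − y²)(a² − ε²))`. -/
theorem zigzag_isDCM (a b ε y : ℂ)
    (ha0 : a ≠ 0) (hb0 : b ≠ 0) (he0 : ε ≠ 0) (hy0 : y ≠ 0)
    (hay : a ≠ y) (hay' : a ≠ -y) (hae : a ≠ ε) (hae' : a ≠ -ε)
    (hby : b ≠ y) (hby' : b ≠ -y) (hey : ε ≠ y)
    (z : ℤ → ℤ → ℂ) (hz : ∀ k m : ℤ, z k m = hfun a b ε y k m)
    (q : ℂ)
    (hq : q = ((a ^ 2 - y ^ 2) * (b ^ 2 - ε ^ 2)) /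
              ((b ^ 2 - y ^ 2) * (a ^ 2 - ε ^ 2))) :
    ∀ k m : ℤ,
      (z k (m+1) - z k m) * (z (k+1) m - z (k+1) (m+1)) =
        q * ((z k m - z (k+1) m) * (z (k+1) (m+1) - z k (m+1))) := by
  intro k m
  have hApY : a + y ≠ 0 := fun h => hay' (by linear_combination h)
  have hAmY : a - y ≠ 0 := sub_ne_zero.mpr hay
  have hBpY : b + y ≠ 0 := fun h => hby' (by linear_combination h)
  have hBmY : b - y ≠ 0 := sub_ne_zero.mpr hby
  have hEmY : ε - y ≠ 0 := sub_ne_zero.mpr hey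
  have hAE : a ^ 2 - ε ^ 2 ≠ 0 := by
    intro h
    rcases mul_eq_zero.mp (show (a - ε) * (a + ε) = 0 by linear_combination h) with h' | h'
    · exact hae (by linear_combination h')
    · exact hae' (by linear_combination h')
  have hBY : b ^ 2 - y ^ 2 ≠ 0 := by
    intro h
    rcases mul_eq_zero.mp (show (b - y) * (b + y) = 0 by linear_combination h) with h' | h'
    · exact hBmY h'
    · exact hBpY h'
  have hq' : q * ((b ^ 2 - y ^ 2) * (a ^ 2 - ε ^ 2)) = (a ^ 2 - y ^ 2) * (b ^ 2 - ε ^ 2) := by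
    rw [hq, div_mul_cancel₀ _ (mul_ne_zero hBY hAE)]
  have K := key_id a b ε y q hApY hBpY hEmY hq'
  have hA : (a - y) / (a + y) ≠ 0 := div_ne_zero hAmY hApY
  have hB : (b - y) / (b + y) ≠ 0 := div_ne_zero hBmY hBpY
  simp only [hz, hfun]
  have e1 : k + (m + 1) = (k + m) + 1 := by ring
  have e2 : (k + 1) + m = (k + m) + 1 := by ring
  have e3 : (k + 1) + (m + 1) = (k + m) + 2 := by ring
  rw [e1, e2, e3, zpow_add_one₀ hB, zpow_add_one₀ hA]
  set X := ((a - y) / (a + y)) ^ k with hX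
  set Y := ((b - y) / (b + y)) ^ m with hY
  rcases Int.even_or_odd (k + m) with hpar | hpar
  · have h1 : Even (k + m) := hpar
    have h2 : ¬ Even ((k + m) + 1) := by simp [Int.even_add_one, h1]
    have h3 : Even ((k + m) + 2) := by
      rcases h1 with ⟨t, ht⟩; exact ⟨t + 1, by omega⟩
    simp only [if_pos h1, if_neg h2, if_pos h3, mul_one]
    linear_combination (X ^ 2 * Y ^ 2) * K
  · have h1 : ¬ Even (k + m) := by simpa [Int.even_iff, Int.odd_iff] using hpar
    have h2 : Even ((k + m) + 1) := by rw [Int.even_add_one]; exact h1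
    have h3 : ¬ Even ((k + m) + 2) := by
      intro h; exact h1 (by rcases h with ⟨t, ht⟩; exact ⟨t - 1, by omega⟩)
    simp only [if_neg h1, if_pos h2, if_neg h3, mul_one]
    linear_combination (X ^ 2 * Y ^ 2) * K
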